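/- arXiv:1704.00468 — 6 statements merged into one kernel-verified Lean document; each statement's English description precedes it below -/
import Mathlib

section
/- Let X be the block diagonal matrix with diagonal blocks A and B (and zero off-diagonal blocks), where A and B each have at least k columns. Then X ∈ RIP(k, δ) if and only if both A ∈ RIP(k, δ) and B ∈ RIP(k, δ). -/
/-- `X ∈ RIP(k, δ)`: `(1-δ)‖u‖² ≤ ‖Xu‖² ≤ (1+δ)‖u‖²` for all `k`-sparse `u`. -/
def RIP {m p : Type*} [Fintype m] [Fintype p] (X : Matrix m p ℝ) (k : ℕ) (δ : ℝ) : Prop :=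
  ∀ u : p → ℝ, (Function.support u).ncard ≤ k →
    (1 - δ) * (∑ j, u j ^ 2) ≤ ∑ i, (X.mulVec u i) ^ 2 ∧
      ∑ i, (X.mulVec u i) ^ 2 ≤ (1 + δ) * (∑ j, u j ^ 2)

/-- The block diagonal matrix `[[A,0],[0,B]]`, where `A` and `B` each have at least `k`
columns, is in `RIP(k, δ)` iff both `A ∈ RIP(k, δ)` and `B ∈ RIP(k, δ)`. -/
theorem stmt_2 {mA mB pA pB : ℕ} (A : Matrix (Fin mA) (Fin pA) ℝ)
    (B : Matrix (Fin mB) (Fin pB) ℝ) (k : ℕ) (δ : ℝ) (hA : k ≤ pA) (hB : k ≤ pB) :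
    RIP (Matrix.fromBlocks A 0 0 B) k δ ↔ RIP A k δ ∧ RIP B k δ := by
  constructor
  · intro h
    constructor
    · intro v hv
      have hsupp : Function.support (Sum.elim v (0 : Fin pB → ℝ))
          = Sum.inl '' Function.support v := by
        ext x; cases x <;> simp [Function.support]
      have key := h (Sum.elim v 0) (by
        rw [hsupp, Set.ncard_image_of_injective _ Sum.inl_injective]; exact hv)
      simpa [Matrix.fromBlocks_mulVec, Fintype.sum_sum_type] using key
    · intro v hv
      have hsupp : Function.support (Sum.elim (0 : Fin pA → ℝ) v)
          = Sum.inr '' Function.support v := by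
        ext x; cases x <;> simp [Function.support]
      have key := h (Sum.elim 0 v) (by
        rw [hsupp, Set.ncard_image_of_injective _ Sum.inr_injective]; exact hv)
      simpa [Matrix.fromBlocks_mulVec, Fintype.sum_sum_type] using key
  · rintro ⟨h1, h2⟩ u hu
    set f : Fin pA → ℝ := u ∘ Sum.inl with hf
    set g : Fin pB → ℝ := u ∘ Sum.inr with hg
    have huf : Function.support f ⊆ Sum.inl ⁻¹' Function.support u := by
      intro x hx; exact hx
    have hcf : (Function.support f).ncard ≤ k := by
      refine le_trans ?_ hu
      have : Sum.inl '' Function.support f ⊆ Function.support u := by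
        rintro _ ⟨x, hx, rfl⟩; exact hx
      calc (Function.support f).ncard
          = (Sum.inl '' Function.support f).ncard :=
            (Set.ncard_image_of_injective _ Sum.inl_injective).symm
        _ ≤ (Function.support u).ncard := Set.ncard_le_ncard this (Set.toFinite _)
    have hcg : (Function.support g).ncard ≤ k := by
      refine le_trans ?_ hu
      have : Sum.inr '' Function.support g ⊆ Function.support u := by
        rintro _ ⟨x, hx, rfl⟩; exact hx
      calc (Function.support g).ncard
          = (Sum.inr '' Function.support g).ncard :=
            (Set.ncard_image_of_injective _ Sum.inr_injective).symm
        _ ≤ (Function.support u).ncard := Set.ncard_le_ncard this (Set.toFinite _)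
    have hu' : u = Sum.elim f g := by funext x; cases x <;> rfl
    have hAf := h1 f hcf
    have hBg := h2 g hcg
    rw [hu']
    constructor
    · calc (1 - δ) * ∑ j : Fin pA ⊕ Fin pB, Sum.elim f g j ^ 2
          = (1 - δ) * ∑ j, f j ^ 2 + (1 - δ) * ∑ j, g j ^ 2 := by
            rw [Fintype.sum_sum_type]; simp only [Sum.elim_inl, Sum.elim_inr]; ring
        _ ≤ ∑ i, A.mulVec f i ^ 2 + ∑ i, B.mulVec g i ^ 2 :=
            add_le_add hAf.1 hBg.1
        _ = ∑ i, (Matrix.fromBlocks A 0 0 B).mulVec (Sum.elim f g) i ^ 2 := by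
            simp [Matrix.fromBlocks_mulVec, Fintype.sum_sum_type]
    · calc ∑ i, (Matrix.fromBlocks A 0 0 B).mulVec (Sum.elim f g) i ^ 2
          = ∑ i, A.mulVec f i ^ 2 + ∑ i, B.mulVec g i ^ 2 := by
            simp [Matrix.fromBlocks_mulVec, Fintype.sum_sum_type]
        _ ≤ (1 + δ) * ∑ j, f j ^ 2 + (1 + δ) * ∑ j, g j ^ 2 :=
            add_le_add hAf.2 hBg.2
        _ = (1 + δ) * ∑ j : Fin pA ⊕ Fin pB, Sum.elim f g j ^ 2 := by
            rw [Fintype.sum_sum_type]; simp only [Sum.elim_inl, Sum.elim_inr]; ring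
end

section
/- Let X satisfy ‖Xu‖² ≤ (1+δ)‖u‖² for all u, and let X' = μX for a scalar 0 < μ ≤ 1. Fix δ' ∈ (δ, 1), λ₂ > 1 with λ₂δ < 1, and suppose μ² ∈ [(1-δ')/(1-δ), (1-δ')/(1-λ₂δ)). Then: (a) if X ∈ RIP(k, δ) then X' ∈ RIP(k, δ'); and (b) if X ∉ RIP(k', λ₂δ), then X' ∉ RIP(k', λ₂'δ') where λ₂' = (1 - μ²(1 - λ₂δ))/δ' > 1. -/
lemma smul_sum_sq {n p : ℕ} (X : Matrix (Fin n) (Fin p) ℝ) (μ : ℝ) (u : Fin p → ℝ) :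
    ∑ i, ((μ • X).mulVec u i) ^ 2 = μ ^ 2 * ∑ i, (X.mulVec u i) ^ 2 := by
  rw [Finset.mul_sum]
  refine Finset.sum_congr rfl fun i _ => ?_
  rw [Matrix.smul_mulVec]
  simp [Pi.smul_apply, smul_eq_mul, mul_pow]

/-- Rescaling: if `‖Xu‖² ≤ (1+δ)‖u‖²` for all `u` and `X' = μX` with
`μ² ∈ [(1-δ')/(1-δ), (1-δ')/(1-λ₂δ))`, then (a) `X ∈ RIP(k, δ)` implies `X' ∈ RIP(k, δ')`,
and (b) `X ∉ RIP(k', λ₂δ)` implies `X' ∉ RIP(k', λ₂'δ')` where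
`λ₂' = (1 - μ²(1 - λ₂δ))/δ' > 1`. -/
theorem stmt_7 {n p : ℕ} (X : Matrix (Fin n) (Fin p) ℝ) (k k' : ℕ) (δ δ' μ lam₂ : ℝ)
    (hδ : 0 < δ) (hδ' : δ < δ' ∧ δ' < 1) (hlam₂ : 1 < lam₂) (hlamδ : lam₂ * δ < 1)
    (hμ0 : 0 < μ) (hμ1 : μ ≤ 1)
    (hμlo : (1 - δ') / (1 - δ) ≤ μ ^ 2) (hμhi : μ ^ 2 < (1 - δ') / (1 - lam₂ * δ))
    (hub : ∀ u : Fin p → ℝ, ∑ i, (X.mulVec u i) ^ 2 ≤ (1 + δ) * ∑ j, u j ^ 2) :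
    (RIP X k δ → RIP (μ • X) k δ') ∧
      (1 : ℝ) < (1 - μ ^ 2 * (1 - lam₂ * δ)) / δ' ∧
      (¬ RIP X k' (lam₂ * δ) →
        ¬ RIP (μ • X) k' (((1 - μ ^ 2 * (1 - lam₂ * δ)) / δ') * δ')) := by
  obtain ⟨hδδ', hδ'1⟩ := hδ'
  have hδ'0 : 0 < δ' := lt_trans hδ hδδ'
  have h1δ : (0:ℝ) < 1 - δ := by nlinarith
  have hlδ : (0:ℝ) < 1 - lam₂ * δ := by linarith
  have hμ2 : 0 < μ ^ 2 := by positivity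
  have hlo : 1 - δ' ≤ μ ^ 2 * (1 - δ) := by
    rw [div_le_iff₀ h1δ] at hμlo; linarith
  have hhi : μ ^ 2 * (1 - lam₂ * δ) < 1 - δ' := by
    rw [lt_div_iff₀ hlδ] at hμhi; linarith
  have hcancel : ((1 - μ ^ 2 * (1 - lam₂ * δ)) / δ') * δ' = 1 - μ ^ 2 * (1 - lam₂ * δ) :=
    div_mul_cancel₀ _ (ne_of_gt hδ'0)
  refine ⟨?_, ?_, ?_⟩
  · intro hX u hu
    obtain ⟨hl, hr⟩ := hX u hu
    rw [smul_sum_sq]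
    have hS : 0 ≤ ∑ j, u j ^ 2 := Finset.sum_nonneg fun j _ => sq_nonneg _
    have hμ21 : μ ^ 2 ≤ 1 := by nlinarith
    constructor
    · nlinarith
    · nlinarith [mul_le_mul_of_nonneg_left hr hμ2.le]
  · rw [lt_div_iff₀ hδ'0]; linarith
  · intro hX h2
    apply hX
    intro u hu
    obtain ⟨hl, _⟩ := h2 u hu
    rw [smul_sum_sq, hcancel] at hl
    refine ⟨by nlinarith, ?_⟩
    calc ∑ i, (X.mulVec u i) ^ 2 ≤ (1 + δ) * ∑ j, u j ^ 2 := hub u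
      _ ≤ (1 + lam₂ * δ) * ∑ j, u j ^ 2 := by
          have hS : 0 ≤ ∑ j, u j ^ 2 := Finset.sum_nonneg fun j _ => sq_nonneg _
          nlinarith
end

section
/- Let w ∈ R^{3n} with ‖w‖² = 2n, write w = (w⁺; w⁻; v) with w⁺, w⁻, v ∈ R^n, and suppose ‖X̃w‖² ≤ 2n where X̃ is the matrix of equation (7). Then with v̄ = (1/n)Σᵢ vᵢ: (i) Σᵢ(vᵢ - v̄)² < 2ξ²n, (ii) Σᵢ(wᵢ⁺ + wᵢ⁻ - v̄)² < 8ξ²n, and (iii) if moreover ‖X̃w‖² ≤ (1+ε²)n, then v̄² > 1 - 3ε². -/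
/-- The matrix `X̃` of equation (7), with blocks
`[I,0,0; 0,I,0; 0,0,ξ⁻¹P; ξ⁻¹I,ξ⁻¹I,-ξ⁻¹I; εΦ,0,-εI']`, where `P = I - (1/n)𝟙𝟙ᵀ` and
`I'` is the `n×n` identity truncated to `m` rows. Rows are indexed by
`Fin n ⊕ Fin n ⊕ Fin n ⊕ Fin n ⊕ Fin m` and columns by `Fin n ⊕ Fin n ⊕ Fin n`. -/
noncomputable def Xt (n m : ℕ) (Φ : Matrix (Fin m) (Fin n) ℝ) (ε ξ : ℝ) :
    Matrix (Fin n ⊕ Fin n ⊕ Fin n ⊕ Fin n ⊕ Fin m) (Fin n ⊕ Fin n ⊕ Fin n) ℝ :=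
  Matrix.of fun i j =>
    match i, j with
    | .inl i, .inl j => if i = j then 1 else 0
    | .inl _, _ => 0
    | .inr (.inl i), .inr (.inl j) => if i = j then 1 else 0
    | .inr (.inl _), _ => 0
    | .inr (.inr (.inl i)), .inr (.inr j) => ξ⁻¹ * ((if i = j then 1 else 0) - 1 / n)
    | .inr (.inr (.inl _)), _ => 0
    | .inr (.inr (.inr (.inl i))), .inl j => ξ⁻¹ * (if i = j then 1 else 0)
    | .inr (.inr (.inr (.inl i))), .inr (.inl j) => ξ⁻¹ * (if i = j then 1 else 0)
    | .inr (.inr (.inr (.inl i))), .inr (.inr j) => -(ξ⁻¹) * (if i = j then 1 else 0)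
    | .inr (.inr (.inr (.inr i))), .inl j => ε * Φ i j
    | .inr (.inr (.inr (.inr _))), .inr (.inl _) => 0
    | .inr (.inr (.inr (.inr i))), .inr (.inr j) =>
        -ε * (if (i : ℕ) = (j : ℕ) then 1 else 0)

set_option maxHeartbeats 2000000 in
/-- Lemma 1 of the paper: if `‖w‖² = 2n` and `‖X̃w‖² ≤ 2n`, then writing
`w = (w⁺; w⁻; v)` and `v̄ = (1/n)Σᵢ vᵢ`: (i) `Σᵢ(vᵢ - v̄)² < 2ξ²n`,
(ii) `Σᵢ(wᵢ⁺ + wᵢ⁻ - v̄)² < 8ξ²n`, and (iii) if moreover `‖X̃w‖² ≤ (1+ε²)n`,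
then `v̄² > 1 - 3ε²`. -/
theorem stmt_13 {n m : ℕ} (hn : 0 < n)
    (Φ : Matrix (Fin m) (Fin n) ℝ) (hΦ : ∀ i j, Φ i j = 0 ∨ Φ i j = 1)
    (ε ξ : ℝ) (hξ : 0 < ξ) (hξε : ξ ≤ ε) (hε : ε < 1)
    (w : (Fin n ⊕ Fin n ⊕ Fin n) → ℝ)
    (hw : ∑ j, w j ^ 2 = 2 * n)
    (hXw : ∑ i, ((Xt n m Φ ε ξ).mulVec w i) ^ 2 ≤ 2 * n) :
    (∑ i, (w (Sum.inr (Sum.inr i)) -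
        (1 / n) * ∑ i', w (Sum.inr (Sum.inr i'))) ^ 2 < 2 * ξ ^ 2 * n) ∧
    (∑ i, (w (Sum.inl i) + w (Sum.inr (Sum.inl i)) -
        (1 / n) * ∑ i', w (Sum.inr (Sum.inr i'))) ^ 2 < 8 * ξ ^ 2 * n) ∧
    (∑ i, ((Xt n m Φ ε ξ).mulVec w i) ^ 2 ≤ (1 + ε ^ 2) * n →
      ((1 / n) * ∑ i', w (Sum.inr (Sum.inr i'))) ^ 2 > 1 - 3 * ε ^ 2) := by
  
  set a : Fin n → ℝ := fun i => w (Sum.inl i) with ha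
  set b : Fin n → ℝ := fun i => w (Sum.inr (Sum.inl i)) with hb
  set v : Fin n → ℝ := fun i => w (Sum.inr (Sum.inr i)) with hv
  set vb : ℝ := (1 / n) * ∑ i', w (Sum.inr (Sum.inr i')) with hvb
  have hn' : (0:ℝ) < n := by exact_mod_cast hn
  have hξne : ξ ≠ 0 := ne_of_gt hξ
  -- row computations
  have row1 : ∀ i, (Xt n m Φ ε ξ).mulVec w (Sum.inl i) = a i := by
    intro i
    simp [Xt, Matrix.mulVec, dotProduct, Fintype.sum_sum_type, ite_mul, ha]
  have row2 : ∀ i, (Xt n m Φ ε ξ).mulVec w (Sum.inr (Sum.inl i)) = b i := by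
    intro i
    simp [Xt, Matrix.mulVec, dotProduct, Fintype.sum_sum_type, ite_mul, hb]
  have row3 : ∀ i, (Xt n m Φ ε ξ).mulVec w (Sum.inr (Sum.inr (Sum.inl i))) =
      ξ⁻¹ * (v i - vb) := by
    intro i
    simp only [Xt, Matrix.mulVec, dotProduct, Matrix.of_apply, Fintype.sum_sum_type]
    simp [sub_mul, ite_mul, Finset.sum_sub_distrib, Finset.mul_sum, mul_sub, hvb, hv]
    exact Finset.sum_congr rfl fun _ _ => by ring
  have row4 : ∀ i, (Xt n m Φ ε ξ).mulVec w (Sum.inr (Sum.inr (Sum.inr (Sum.inl i)))) =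
      ξ⁻¹ * (a i + b i - v i) := by
    intro i
    simp [Xt, Matrix.mulVec, dotProduct, Fintype.sum_sum_type, ite_mul, ha, hb, hv]
    ring
  -- split the norm of X̃ w
  have hsplit : ∀ (u : (Fin n ⊕ Fin n ⊕ Fin n ⊕ Fin n ⊕ Fin m) → ℝ),
      ∑ i, u i ^ 2 = (∑ i, u (Sum.inl i) ^ 2) + (∑ i, u (Sum.inr (Sum.inl i)) ^ 2)
        + (∑ i, u (Sum.inr (Sum.inr (Sum.inl i))) ^ 2)
        + (∑ i, u (Sum.inr (Sum.inr (Sum.inr (Sum.inl i)))) ^ 2)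
        + (∑ i, u (Sum.inr (Sum.inr (Sum.inr (Sum.inr i)))) ^ 2) := by
    intro u
    simp [Fintype.sum_sum_type]
    ring
  have hsplit3 : ∀ (u : (Fin n ⊕ Fin n ⊕ Fin n) → ℝ),
      ∑ i, u i ^ 2 = (∑ i, u (Sum.inl i) ^ 2) + (∑ i, u (Sum.inr (Sum.inl i)) ^ 2)
        + (∑ i, u (Sum.inr (Sum.inr i)) ^ 2) := by
    intro u
    simp [Fintype.sum_sum_type]
    ring
  set A : ℝ := ∑ i, a i ^ 2 with hA
  set B : ℝ := ∑ i, b i ^ 2 with hB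
  set V : ℝ := ∑ i, v i ^ 2 with hV
  set C : ℝ := ∑ i, (v i - vb) ^ 2 with hC
  set D : ℝ := ∑ i, (a i + b i - v i) ^ 2 with hD
  have hApos : 0 ≤ A := Finset.sum_nonneg fun _ _ => sq_nonneg _
  have hBpos : 0 ≤ B := Finset.sum_nonneg fun _ _ => sq_nonneg _
  have hVpos : 0 ≤ V := Finset.sum_nonneg fun _ _ => sq_nonneg _
  have hCpos : 0 ≤ C := Finset.sum_nonneg fun _ _ => sq_nonneg _
  have hDpos : 0 ≤ D := Finset.sum_nonneg fun _ _ => sq_nonneg _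
  set E : ℝ := ∑ i : Fin m,
      ((Xt n m Φ ε ξ).mulVec w (Sum.inr (Sum.inr (Sum.inr (Sum.inr i))))) ^ 2 with hE
  have hEpos : 0 ≤ E := Finset.sum_nonneg fun _ _ => sq_nonneg _
  have hnorm : ∑ i, ((Xt n m Φ ε ξ).mulVec w i) ^ 2
      = A + B + ξ⁻¹ ^ 2 * C + ξ⁻¹ ^ 2 * D + E := by
    rw [hsplit]
    simp only [row1, row2, row3, row4, mul_pow]
    rw [← Finset.mul_sum, ← Finset.mul_sum]
  have hw' : A + B + V = 2 * n := by
    rw [hA, hB, hV, ha, hb, hv, ← hsplit3, hw]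
  -- mass identity
  have hsum_v : (n : ℝ) * vb = ∑ i, v i := by
    rw [hvb, hv]; field_simp
  have hCid : C = V - n * vb ^ 2 := by
    have expand : ∀ i : Fin n, (v i - vb) ^ 2 = v i ^ 2 - 2 * vb * v i + vb ^ 2 := by
      intro i; ring
    rw [hC, Finset.sum_congr rfl fun i _ => expand i]
    rw [Finset.sum_add_distrib, Finset.sum_sub_distrib, ← Finset.mul_sum, ← hsum_v,
      Finset.sum_const, Finset.card_univ, Fintype.card_fin, nsmul_eq_mul, hV]
    ring
  -- pointwise Young inequality: V ≤ 2D + 4A + 4B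
  have hYoung : V ≤ 2 * D + 4 * A + 4 * B := by
    have step : V ≤ ∑ i, (2 * (a i + b i - v i) ^ 2 + 4 * a i ^ 2 + 4 * b i ^ 2) := by
      rw [hV]
      apply Finset.sum_le_sum
      intro i _
      nlinarith [sq_nonneg (v i - 2 * a i - 2 * b i), sq_nonneg (a i - b i)]
    calc V ≤ _ := step
      _ = 2 * D + 4 * A + 4 * B := by
          rw [Finset.sum_add_distrib, Finset.sum_add_distrib, ← Finset.mul_sum,
            ← Finset.mul_sum, ← Finset.mul_sum, hA, hB, hD]
  clear_value A B V C D E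
  have hxi1 : ξ < 1 := lt_of_le_of_lt hξε hε
  have hipos : (0:ℝ) < ξ⁻¹ ^ 2 := by positivity
  have hxinv : ξ⁻¹ * ξ = 1 := inv_mul_cancel₀ hξne
  have hxigt : 1 < ξ⁻¹ := (one_lt_inv₀ hξ).2 hxi1
  have ht2 : 1 < ξ⁻¹ ^ 2 := by nlinarith
  have key : A + B + ξ⁻¹ ^ 2 * C + ξ⁻¹ ^ 2 * D ≤ 2 * n := by
    rw [hnorm] at hXw; linarith
  have hξ2n : 0 < ξ ^ 2 * n := by positivity
  -- (i)
  have part1 : C < 2 * ξ ^ 2 * n := by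
    by_contra hcon
    push_neg at hcon
    have e1 : ξ⁻¹ ^ 2 * (2 * ξ ^ 2 * n) = 2 * n := by field_simp
    have h1 : 2 * (n:ℝ) ≤ ξ⁻¹ ^ 2 * C := by
      rw [← e1]; exact mul_le_mul_of_nonneg_left hcon hipos.le
    have hDA : ξ⁻¹ ^ 2 * D + A + B ≤ 0 := by linarith
    have hDge := mul_le_mul_of_nonneg_right ht2.le hDpos
    linarith
  refine ⟨part1, ?_, ?_⟩
  -- (ii)
  · have hCD : ξ⁻¹ ^ 2 * (C + D) ≤ V := by linarith
    have e2 : ξ ^ 2 * (ξ⁻¹ ^ 2 * (C + D)) = C + D := by field_simp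
    have hCD' : C + D ≤ ξ ^ 2 * V := by
      rw [← e2]; exact mul_le_mul_of_nonneg_left hCD (sq_nonneg ξ)
    have hVle : V ≤ 2 * n := by linarith
    have hV2 : ξ ^ 2 * V ≤ ξ ^ 2 * (2 * n) :=
      mul_le_mul_of_nonneg_left hVle (sq_nonneg ξ)
    have hbound : ∑ i, (a i + b i - vb) ^ 2 ≤ 2 * D + 2 * C := by
      have step : ∑ i, (a i + b i - vb) ^ 2
          ≤ ∑ i, (2 * (a i + b i - v i) ^ 2 + 2 * (v i - vb) ^ 2) := by
        apply Finset.sum_le_sum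
        intro i _
        nlinarith [sq_nonneg ((a i + b i - v i) - (v i - vb))]
      calc ∑ i, (a i + b i - vb) ^ 2 ≤ _ := step
        _ = 2 * D + 2 * C := by
            rw [Finset.sum_add_distrib, ← Finset.mul_sum, ← Finset.mul_sum, hC, hD]
    linarith
  -- (iii)
  · intro hXw'
    rw [hnorm] at hXw'
    have hεpos : 0 < ε := lt_of_lt_of_le hξ hξε
    have hCge := mul_le_mul_of_nonneg_right ht2.le hCpos
    have hDge : 0 ≤ ξ⁻¹ ^ 2 * D := mul_nonneg hipos.le hDpos
    have h1 : A + B + C ≤ (1 + ε ^ 2) * n := by linarith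
    have h3 : (1 - ε ^ 2) * n ≤ (n : ℝ) * vb ^ 2 := by linarith [hCid]
    by_contra hcon
    push_neg at hcon
    have h4 := mul_le_mul_of_nonneg_left hcon hn'.le
    have hεn : 0 < ε ^ 2 * n := by positivity
    nlinarith
end

section
/- Let w = (w⁺; w⁻; v) ∈ R^{3n} with ‖w‖² = 2n, ‖w‖₀ ≤ 2(1+ξ²)n, and ‖X̃w‖² ≤ (1+ε²)n, where ε² < 1/6. Define I = {i : wᵢ⁺ ≠ 0 and wᵢ⁻ ≠ 0} and J = {j : w_j⁺ = 0 and w_j⁻ = 0}. Then |I| + |J| < 38ξ²n. -/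
private lemma card_mul_le_sum {n : ℕ} (p : Fin n → Prop) [DecidablePred p] (f : Fin n → ℝ)
    (c : ℝ) (h : ∀ j, p j → c ≤ f j) (h0 : ∀ j, 0 ≤ f j) :
    ((Finset.univ.filter p).card : ℝ) * c ≤ ∑ j, f j := by
  calc ((Finset.univ.filter p).card : ℝ) * c = ∑ _j ∈ Finset.univ.filter p, c := by
        rw [Finset.sum_const, nsmul_eq_mul]
    _ ≤ ∑ j ∈ Finset.univ.filter p, f j :=
        Finset.sum_le_sum fun j hj => h j (Finset.mem_filter.mp hj).2
    _ ≤ ∑ j, f j := Finset.sum_le_sum_of_subset_of_nonneg (Finset.subset_univ _)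
        (fun j _ _ => h0 j)

set_option maxHeartbeats 1000000 in
private lemma aux_sq_add (a b : ℝ) : (a + b)^2 ≤ 2*a^2 + 2*b^2 := by
  nlinarith [sq_nonneg (a - b)]

private lemma aux_half (a b : ℝ) (h1 : b ≤ a) (h2 : a < 1/6) (h3 : 0 ≤ b) :
    1/2 < 1 - a - b - b*a := by nlinarith

/-- Lemma 2 of the paper: if `ε² < 1/6`, `‖w‖² = 2n`, `‖w‖₀ ≤ 2(1+ξ²)n` and
`‖X̃w‖² ≤ (1+ε²)n`, then, with `I = {i : wᵢ⁺ ≠ 0 ∧ wᵢ⁻ ≠ 0}` and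
`J = {j : w_j⁺ = 0 ∧ w_j⁻ = 0}`, one has `|I| + |J| < 38ξ²n`. -/
theorem stmt_14 {n m : ℕ} (hn : 0 < n)
    (Φ : Matrix (Fin m) (Fin n) ℝ) (hΦ : ∀ i j, Φ i j = 0 ∨ Φ i j = 1)
    (ε ξ : ℝ) (hξ : 0 < ξ) (hξε : ξ ≤ ε) (hε : ε ^ 2 < 1 / 6)
    (w : (Fin n ⊕ Fin n ⊕ Fin n) → ℝ)
    (hw : ∑ j, w j ^ 2 = 2 * n)
    (hw0 : ((Function.support w).ncard : ℝ) ≤ 2 * (1 + ξ ^ 2) * n)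
    (hXw : ∑ i, ((Xt n m Φ ε ξ).mulVec w i) ^ 2 ≤ (1 + ε ^ 2) * n) :
    (({i : Fin n | w (Sum.inl i) ≠ 0 ∧ w (Sum.inr (Sum.inl i)) ≠ 0}.ncard : ℝ) +
        ({j : Fin n | w (Sum.inl j) = 0 ∧ w (Sum.inr (Sum.inl j)) = 0}.ncard : ℝ))
      < 38 * ξ ^ 2 * n := by
  classical
  set wp : Fin n → ℝ := fun i => w (Sum.inl i) with hwp
  set wm : Fin n → ℝ := fun i => w (Sum.inr (Sum.inl i)) with hwm
  set v : Fin n → ℝ := fun i => w (Sum.inr (Sum.inr i)) with hv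
  set vb : ℝ := (∑ j, v j) / n with hvb
  have hn' : (0:ℝ) < n := by exact_mod_cast hn
  have hsv : ∑ j, v j = n * vb := by rw [hvb]; field_simp [hn'.ne']
  -- mulVec on each block
  have hX1 : ∀ i, (Xt n m Φ ε ξ).mulVec w (Sum.inl i) = wp i := fun i => by
    simp [Xt, Matrix.mulVec, dotProduct, Fintype.sum_sum_type, ite_mul, hwp]
  have hX2 : ∀ i, (Xt n m Φ ε ξ).mulVec w (Sum.inr (Sum.inl i)) = wm i := fun i => by
    simp [Xt, Matrix.mulVec, dotProduct, Fintype.sum_sum_type, ite_mul, hwm]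
  have hX3 : ∀ i, (Xt n m Φ ε ξ).mulVec w (Sum.inr (Sum.inr (Sum.inl i))) =
      ξ⁻¹ * (v i - vb) := fun i => by
    rw [hvb]
    simp only [hv]
    simp [Xt, Matrix.mulVec, dotProduct, Fintype.sum_sum_type, ite_mul, sub_mul,
      Finset.sum_sub_distrib, Finset.mul_sum, mul_comm, mul_assoc, mul_sub]
    ring_nf
    try rw [Finset.mul_sum]
    try ring_nf
  have hX4 : ∀ i, (Xt n m Φ ε ξ).mulVec w (Sum.inr (Sum.inr (Sum.inr (Sum.inl i)))) =
      ξ⁻¹ * (wp i + wm i - v i) := fun i => by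
    simp [Xt, Matrix.mulVec, dotProduct, Fintype.sum_sum_type, ite_mul, hwp, hwm, hv]
    ring
  -- sums
  set S1 : ℝ := ∑ i, (v i - vb)^2 with hS1def
  set S2 : ℝ := ∑ i, (wp i + wm i - v i)^2 with hS2def
  set A : ℝ := (∑ i, wp i ^ 2) + ∑ i, wm i ^ 2 with hAdef
  set V : ℝ := ∑ i, v i ^ 2 with hVdef
  have hS1nn : 0 ≤ S1 := Finset.sum_nonneg fun i _ => sq_nonneg _
  have hS2nn : 0 ≤ S2 := Finset.sum_nonneg fun i _ => sq_nonneg _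
  have hAnn : 0 ≤ A := by
    rw [hAdef]; positivity
  have hAV : A + V = 2 * n := by
    rw [Fintype.sum_sum_type, Fintype.sum_sum_type] at hw
    rw [hAdef, hVdef]; linarith [hw]
  -- key inequality
  have hkey : A + ξ⁻¹^2 * S1 + ξ⁻¹^2 * S2 ≤ (1 + ε^2) * n := by
    rw [Fintype.sum_sum_type, Fintype.sum_sum_type, Fintype.sum_sum_type,
      Fintype.sum_sum_type] at hXw
    simp only [hX1, hX2, hX3, hX4, mul_pow] at hXw
    have h5nn : 0 ≤ ∑ i : Fin m,
        ((Xt n m Φ ε ξ).mulVec w (Sum.inr (Sum.inr (Sum.inr (Sum.inr i)))))^2 :=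
      Finset.sum_nonneg fun i _ => sq_nonneg _
    rw [← Finset.mul_sum, ← Finset.mul_sum] at hXw
    rw [hAdef, hS1def, hS2def]
    linarith [hXw, h5nn]
  have hx2 : (0:ℝ) < ξ^2 := by positivity
  have hxe2 : ξ^2 ≤ ε^2 := pow_le_pow_left₀ (le_of_lt hξ) hξε 2
  have hS : S1 + S2 ≤ ξ^2 * (1 + ε^2) * n := by
    have h1 : ξ⁻¹^2 * (S1 + S2) ≤ (1 + ε^2) * n := by linarith
    have h2 : ξ^2 * (ξ⁻¹^2 * (S1 + S2)) = S1 + S2 := by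
      field_simp
    have h3 := mul_le_mul_of_nonneg_left h1 (le_of_lt hx2)
    rw [h2] at h3
    linarith [h3]
  have hA : A ≤ (1 + ε^2) * n := by
    have h1 := mul_nonneg (sq_nonneg ξ⁻¹) hS1nn
    have h2 := mul_nonneg (sq_nonneg ξ⁻¹) hS2nn
    linarith
  have hS1V : S1 = V - n * vb^2 := by
    have h : ∀ j, (v j - vb)^2 = v j ^2 - 2*vb*v j + vb^2 := fun j => by ring
    rw [hS1def, hVdef]
    simp only [h, Finset.sum_add_distrib, Finset.sum_sub_distrib, ← Finset.mul_sum,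
      Finset.sum_const, Finset.card_univ, Fintype.card_fin, nsmul_eq_mul, hsv]
    ring
  -- vbar^2 > 1/2
  have hvb2 : 1/2 < vb^2 := by
    have hnv : (n:ℝ) * vb^2 = V - S1 := by linarith
    have hV' : (1 - ε^2) * n ≤ V := by linarith
    have h1 : (1 - ε^2 - ξ^2 - ξ^2*ε^2) * n ≤ (n:ℝ) * vb^2 := by linarith [hnv, hV', hS, hS2nn]
    have hc : 1/2 < 1 - ε^2 - ξ^2 - ξ^2*ε^2 := by
      have := aux_half (ε^2) (ξ^2) hxe2 hε (sq_nonneg ξ)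
      linarith
    by_contra h
    push_neg at h
    have h2 : (n:ℝ) * vb^2 ≤ n * (1/2) := mul_le_mul_of_nonneg_left h (le_of_lt hn')
    have h3 := mul_lt_mul_of_pos_right hc hn'
    linarith
  -- counting
  set kp : ℕ := (Finset.univ.filter (fun i => wp i ≠ 0)).card with hkp
  set km : ℕ := (Finset.univ.filter (fun i => wm i ≠ 0)).card with hkm
  set kv : ℕ := (Finset.univ.filter (fun i => v i ≠ 0)).card with hkv
  set Z : ℕ := (Finset.univ.filter (fun i => v i = 0)).card with hZ
  set cI : ℕ := (Finset.univ.filter (fun i => wp i ≠ 0 ∧ wm i ≠ 0)).card with hcI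
  set cJ : ℕ := (Finset.univ.filter (fun i => wp i = 0 ∧ wm i = 0)).card with hcJ
  -- support splits
  have hsupp : (Function.support w).ncard = kp + km + kv := by
    have hset : Function.support w = ↑(Finset.univ.filter (fun x => w x ≠ 0)) := by
      ext x; simp [Function.mem_support]
    rw [hset, Set.ncard_coe_finset]
    rw [Finset.card_filter, Fintype.sum_sum_type, Fintype.sum_sum_type]
    rw [hkp, hkm, hkv, Finset.card_filter, Finset.card_filter, Finset.card_filter]
    simp only [hwp, hwm, hv]
    ring
  have hkvZ : kv + Z = n := by
    rw [hkv, hZ, Finset.card_filter, Finset.card_filter, ← Finset.sum_add_distrib]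
    have : ∀ j : Fin n, (if v j ≠ 0 then 1 else 0) + (if v j = 0 then 1 else 0) = 1 :=
      fun j => by by_cases h : v j = 0 <;> simp [h]
    simp only [this, Finset.sum_const, Finset.card_univ, Fintype.card_fin, smul_eq_mul, mul_one]
  have hIJ : kp + km + cJ = cI + n := by
    rw [hkp, hkm, hcJ, hcI, Finset.card_filter, Finset.card_filter, Finset.card_filter,
      Finset.card_filter, ← Finset.sum_add_distrib, ← Finset.sum_add_distrib]
    have : ∀ j : Fin n, ((if wp j ≠ 0 then 1 else 0) + (if wm j ≠ 0 then 1 else 0)) +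
        (if wp j = 0 ∧ wm j = 0 then 1 else 0) =
        (if wp j ≠ 0 ∧ wm j ≠ 0 then 1 else 0) + 1 := fun j => by
      by_cases h1 : wp j = 0 <;> by_cases h2 : wm j = 0 <;> simp [h1, h2]
    rw [Finset.sum_congr rfl fun j _ => this j, Finset.sum_add_distrib]
    simp [Finset.card_univ]
  -- bounds from sums
  have hZb : (Z:ℝ) * vb^2 ≤ S1 := by
    rw [hZ, hS1def]
    exact card_mul_le_sum _ _ _ (fun j hj => by rw [hj]; simp [sq_nonneg]) (fun j => sq_nonneg _)
  have hWb : ∑ j, (wp j + wm j - vb)^2 ≤ 2*S2 + 2*S1 := by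
    have h : ∀ j : Fin n, (wp j + wm j - vb)^2 ≤
        2*(wp j + wm j - v j)^2 + 2*(v j - vb)^2 := fun j => by
      have := aux_sq_add (wp j + wm j - v j) (v j - vb)
      calc (wp j + wm j - vb)^2 = ((wp j + wm j - v j) + (v j - vb))^2 := by ring_nf
        _ ≤ _ := this
    calc ∑ j, (wp j + wm j - vb)^2 ≤ ∑ j, (2*(wp j + wm j - v j)^2 + 2*(v j - vb)^2) :=
          Finset.sum_le_sum fun j _ => h j
      _ = 2*S2 + 2*S1 := by
          rw [Finset.sum_add_distrib, ← Finset.mul_sum, ← Finset.mul_sum, hS1def, hS2def]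
  have hJb : (cJ:ℝ) * vb^2 ≤ 2*S2 + 2*S1 := by
    refine le_trans ?_ hWb
    rw [hcJ]
    exact card_mul_le_sum _ _ _ (fun j hj => by rw [hj.1, hj.2]; simp [sq_nonneg]) (fun j => sq_nonneg _)
  -- cast and finish
  have hJle : (cJ:ℝ) ≤ 4*S1 + 4*S2 := by
    have := mul_le_mul_of_nonneg_left (le_of_lt hvb2) (Nat.cast_nonneg (α := ℝ) cJ)
    linarith
  have hZle : (Z:ℝ) ≤ 2*S1 := by
    have := mul_le_mul_of_nonneg_left (le_of_lt hvb2) (Nat.cast_nonneg (α := ℝ) Z)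
    linarith
  have hsuppR : (kp:ℝ) + km + kv ≤ 2 * (1 + ξ^2) * n := by
    rw [hsupp] at hw0; push_cast at hw0 ⊢; linarith
  have hkvZR : (kv:ℝ) + Z = n := by exact_mod_cast hkvZ
  have hIJR : (kp:ℝ) + km + cJ = cI + n := by exact_mod_cast hIJ
  have hgoal1 : ({i : Fin n | w (Sum.inl i) ≠ 0 ∧ w (Sum.inr (Sum.inl i)) ≠ 0}.ncard : ℝ) = cI := by
    have : {i : Fin n | w (Sum.inl i) ≠ 0 ∧ w (Sum.inr (Sum.inl i)) ≠ 0} =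
        ↑(Finset.univ.filter (fun i => wp i ≠ 0 ∧ wm i ≠ 0)) := by
      ext x; simp [hwp, hwm]
    rw [this, Set.ncard_coe_finset, hcI]
  have hgoal2 : ({j : Fin n | w (Sum.inl j) = 0 ∧ w (Sum.inr (Sum.inl j)) = 0}.ncard : ℝ) = cJ := by
    have : {j : Fin n | w (Sum.inl j) = 0 ∧ w (Sum.inr (Sum.inl j)) = 0} =
        ↑(Finset.univ.filter (fun j => wp j = 0 ∧ wm j = 0)) := by
      ext x; simp [hwp, hwm]
    rw [this, Set.ncard_coe_finset, hcJ]
  rw [hgoal1, hgoal2]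
  have hprod := mul_lt_mul_of_pos_right hε (mul_pos hx2 hn')
  have hxn := mul_nonneg (le_of_lt hx2) (le_of_lt hn')
  linarith [hprod, hxn, hS, hS1nn, hS2nn, hJle, hZle, hsuppR, hkvZR, hIJR]
end

section
/- Under the hypotheses of the previous two lemmas (ε² < 1/6, ξ ≤ ε, w = (w⁺; w⁻; v) with ‖w‖² = 2n, ‖w‖₀ ≤ 2(1+ξ²)n, ‖X̃w‖² ≤ (1+ε²)n), we have ‖w⁺‖² + ‖w⁻‖² > (1 - 25ξ)n. -/
set_option maxHeartbeats 1000000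

open Finset


private lemma hlp_eps_half (ε : ℝ) (h0 : 0 < ε) (h : ε^2 < 1/6) : ε < 1/2 := by nlinarith
private lemma hlp_xi_sq (ξ ε : ℝ) (h0 : 0 < ξ) (h : ξ ≤ ε) : ξ^2 ≤ ε^2 := by nlinarith
private lemma hlp_sqrt (T c : ℝ) (hT0 : 0 ≤ T) (hc : 0 ≤ c) (h : T^2 ≤ c^2) : T ≤ c := by
  nlinarith
private lemma hlp_absb (b : ℝ) (h : b^2 ≤ 2) : |b| ≤ 3/2 :=
  abs_le.mpr ⟨by nlinarith, by nlinarith⟩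
private lemma hlp_twosq (a c : ℝ) : (a + c)^2 ≤ 2*a^2 + 2*c^2 := by nlinarith [sq_nonneg (a - c)]
private lemma hlp_pointwise (x y b : ℝ) :
    (1 - (if x ≠ 0 ∧ y ≠ 0 then (1:ℝ) else 0) - (if x = 0 ∧ y = 0 then (1:ℝ) else 0))
      * (b^2 + 2*b*(x + y - b)) ≤ x^2 + y^2 := by
  by_cases h1 : x = 0 <;> by_cases h2 : y = 0 <;>
    simp [h1, h2] <;>
    nlinarith [sq_nonneg (x + y - b), sq_nonneg (y - b), sq_nonneg (x - b),
      sq_nonneg x, sq_nonneg y]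

lemma main_est (n : ℕ) (hn : 0 < n) (ε ξ : ℝ) (hξ : 0 < ξ) (hξε : ξ ≤ ε) (hε : ε^2 < 1/6)
    (p q v : Fin n → ℝ)
    (hw : ∑ i, p i ^ 2 + ∑ i, q i ^ 2 + ∑ i, v i ^ 2 = 2 * n)
    (hsupp : ∑ i, ((if p i ≠ 0 then (1:ℝ) else 0) + (if q i ≠ 0 then (1:ℝ) else 0)
        + (if v i ≠ 0 then (1:ℝ) else 0)) ≤ 2 * (1 + ξ^2) * n)
    (hX : ∑ i, p i ^ 2 + ∑ i, q i ^ 2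
        + ξ⁻¹ ^ 2 * ∑ i, (v i - (∑ j, v j) / n) ^ 2
        + ξ⁻¹ ^ 2 * ∑ i, (p i + q i - v i) ^ 2 ≤ (1 + ε^2) * n) :
    ∑ i, p i ^ 2 + ∑ i, q i ^ 2 > (1 - 25 * ξ) * n := by
  have hN : (0:ℝ) < n := Nat.cast_pos.mpr hn
  have hε' : 0 < ε := lt_of_lt_of_le hξ hξε
  have hεhalf : ε < 1/2 := hlp_eps_half ε hε' hε
  have hξ2 : ξ^2 ≤ ε^2 := hlp_xi_sq ξ ε hξ hξε
  set N : ℝ := (n : ℝ) with hNdef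
  have hone : ∑ (_i : Fin n), (1:ℝ) = N := by
    rw [Finset.sum_const, card_univ, Fintype.card_fin, nsmul_eq_mul, mul_one]
  set b : ℝ := (∑ j, v j) / n with hbdef
  set S : ℝ := ∑ i, p i ^ 2 + ∑ i, q i ^ 2 with hSdef
  set A : ℝ := ∑ i, (v i - b) ^ 2 with hAdef
  set B : ℝ := ∑ i, (p i + q i - v i) ^ 2 with hBdef
  have hS0 : 0 ≤ S :=
    add_nonneg (sum_nonneg fun i _ => sq_nonneg _) (sum_nonneg fun i _ => sq_nonneg _)
  have hA0 : 0 ≤ A := sum_nonneg fun i _ => sq_nonneg _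
  have hB0 : 0 ≤ B := sum_nonneg fun i _ => sq_nonneg _
  -- consequences of hX
  have hSle : S ≤ (1 + ε^2) * N := by
    linarith [mul_nonneg (sq_nonneg ξ⁻¹) hA0, mul_nonneg (sq_nonneg ξ⁻¹) hB0]
  have hABle : A + B ≤ ξ^2 * ((1 + ε^2) * N - S) := by
    have h1 : ξ⁻¹ ^ 2 * (A + B) ≤ (1 + ε^2) * N - S := by linarith [hX]
    have h2 : ξ^2 * (ξ⁻¹^2 * (A+B)) ≤ ξ^2 * ((1 + ε^2) * N - S) :=
      mul_le_mul_of_nonneg_left h1 (sq_nonneg ξ)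
    calc A + B = ξ^2 * (ξ⁻¹^2 * (A+B)) := by field_simp
    _ ≤ _ := h2
  have hAB2 : A + B ≤ 2 * ξ^2 * N := by
    have h1 : (1 + ε^2) * N - S ≤ 2 * N := by
      have : ε^2 * N ≤ 1 * N := mul_le_mul_of_nonneg_right (by linarith) hN.le
      linarith
    have h2 := mul_le_mul_of_nonneg_left h1 (sq_nonneg ξ)
    linarith [hABle]
  -- mean identities
  have hvb : ∑ j, v j = N * b := by rw [hbdef]; field_simp; rfl
  have hAeq : A = ∑ i, v i ^ 2 - N * b^2 := by
    rw [hAdef]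
    rw [Finset.sum_congr rfl (fun i _ => by ring :
      ∀ i ∈ univ, (v i - b)^2 = v i ^2 - 2*b*(v i) + b^2)]
    rw [Finset.sum_add_distrib, Finset.sum_sub_distrib, ← Finset.mul_sum, hvb,
      Finset.sum_const, card_univ, Fintype.card_fin, nsmul_eq_mul]
    ring
  have hVsum : ∑ i, v i ^ 2 = 2 * N - S := by linarith [hw]
  have hnb : N * b^2 = 2 * N - S - A := by rw [hAeq, hVsum]; ring
  have hb2le : b^2 ≤ 2 := by
    have h1 : b^2 * N ≤ 2 * N := by rw [mul_comm]; linarith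
    exact le_of_mul_le_mul_right h1 hN
  have hb2ge : 1/2 ≤ b^2 := by
    have he1 : ε^2 * N ≤ (1/6) * N := mul_le_mul_of_nonneg_right hε.le hN.le
    have hx1 : ξ^2 * N ≤ ε^2 * N := mul_le_mul_of_nonneg_right hξ2 hN.le
    have h1 : (1/2) * N ≤ b^2 * N := by rw [mul_comm]; linarith
    exact le_of_mul_le_mul_right h1 hN
  -- indicator counts
  set cI : ℝ := ∑ i, (if p i ≠ 0 ∧ q i ≠ 0 then (1:ℝ) else 0) with hcIdef
  set cJ : ℝ := ∑ i, (if p i = 0 ∧ q i = 0 then (1:ℝ) else 0) with hcJdef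
  set cZ : ℝ := ∑ i, (if v i = 0 then (1:ℝ) else 0) with hcZdef
  have hcI0 : 0 ≤ cI := sum_nonneg fun i _ => by positivity
  have hcJ0 : 0 ≤ cJ := sum_nonneg fun i _ => by positivity
  have hcZ0 : 0 ≤ cZ := sum_nonneg fun i _ => by positivity
  have hcount : cI - cJ - cZ ≤ 2 * ξ^2 * N := by
    have key : ∀ i ∈ univ, ((if p i ≠ 0 then (1:ℝ) else 0) + (if q i ≠ 0 then (1:ℝ) else 0)
          + (if v i ≠ 0 then (1:ℝ) else 0))
        = 1 + (if p i ≠ 0 ∧ q i ≠ 0 then (1:ℝ) else 0)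
          - (if p i = 0 ∧ q i = 0 then (1:ℝ) else 0)
          + (1 - (if v i = 0 then (1:ℝ) else 0)) := by
      intro i _
      by_cases h1 : p i = 0 <;> by_cases h2 : q i = 0 <;> by_cases h3 : v i = 0 <;>
        simp [h1, h2, h3]
    rw [Finset.sum_congr rfl key] at hsupp
    simp only [Finset.sum_add_distrib, Finset.sum_sub_distrib] at hsupp
    rw [hone] at hsupp
    rw [← hcIdef, ← hcJdef, ← hcZdef] at hsupp
    linarith [hsupp]
  -- D and its bounds
  set D : ℝ := ∑ i, (p i + q i - b) ^ 2 with hDdef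
  have hD0 : 0 ≤ D := sum_nonneg fun i _ => sq_nonneg _
  have hDle : D ≤ 2 * B + 2 * A := by
    have key : ∀ i ∈ univ, (p i + q i - b)^2
        ≤ 2*(p i + q i - v i)^2 + 2*(v i - b)^2 := by
      intro i _
      have := hlp_twosq (p i + q i - v i) (v i - b)
      calc (p i + q i - b)^2 = ((p i + q i - v i) + (v i - b))^2 := by ring
      _ ≤ _ := this
    calc D ≤ ∑ i, (2*(p i + q i - v i)^2 + 2*(v i - b)^2) := Finset.sum_le_sum key
    _ = 2 * B + 2 * A := by
        rw [Finset.sum_add_distrib, ← Finset.mul_sum, ← Finset.mul_sum]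
  have hD4 : D ≤ 4 * ξ^2 * N := by linarith
  -- cZ and cJ bounds
  have hcZA : cZ * b^2 ≤ A := by
    rw [hcZdef, hAdef, Finset.sum_mul]
    apply Finset.sum_le_sum
    intro i _
    by_cases h : v i = 0
    · simp [h]
    · simp [h]; positivity
  have hcJD : cJ * b^2 ≤ D := by
    rw [hcJdef, hDdef, Finset.sum_mul]
    apply Finset.sum_le_sum
    intro i _
    by_cases h1 : p i = 0 <;> by_cases h2 : q i = 0 <;> simp [h1, h2] <;> positivity
  have hcZ4 : cZ ≤ 4 * ξ^2 * N := by
    linarith [mul_le_mul_of_nonneg_left hb2ge hcZ0]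
  have hcJ8 : cJ ≤ 8 * ξ^2 * N := by
    linarith [mul_le_mul_of_nonneg_left hb2ge hcJ0]
  have hcIJ : cI + cJ ≤ 22 * ξ^2 * N := by linarith
  -- Cauchy-Schwarz
  set T : ℝ := ∑ i, |p i + q i - b| with hTdef
  have hT0 : 0 ≤ T := sum_nonneg fun i _ => abs_nonneg _
  have hT2 : T^2 ≤ N * D := by
    have h := Finset.sum_mul_sq_le_sq_mul_sq univ (fun _ => (1:ℝ)) (fun i => |p i + q i - b|)
    simp only [one_mul, one_pow, sq_abs] at h
    rw [hone, ← hDdef, ← hTdef] at h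
    exact h
  have hT : T ≤ 2 * ξ * N := by
    have h1 : N * D ≤ N * (4 * ξ^2 * N) := mul_le_mul_of_nonneg_left hD4 hN.le
    refine hlp_sqrt T (2*ξ*N) hT0 (by positivity) ?_
    calc T^2 ≤ N * D := hT2
    _ ≤ N * (4 * ξ^2 * N) := h1
    _ = (2*ξ*N)^2 := by ring
  -- main estimate
  set T' : ℝ := ∑ i, (1 - (if p i ≠ 0 ∧ q i ≠ 0 then (1:ℝ) else 0)
      - (if p i = 0 ∧ q i = 0 then (1:ℝ) else 0)) * (p i + q i - b) with hT'def
  have hT'abs : |T'| ≤ T := by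
    rw [hT'def, hTdef]
    refine (Finset.abs_sum_le_sum_abs _ _).trans (Finset.sum_le_sum ?_)
    intro i _
    by_cases h1 : p i = 0 <;> by_cases h2 : q i = 0 <;> simp [h1, h2, abs_mul]
  have hmain : (N - cI - cJ) * b^2 + 2*b*T' ≤ S := by
    have key : ∀ i ∈ univ,
        (1 - (if p i ≠ 0 ∧ q i ≠ 0 then (1:ℝ) else 0)
           - (if p i = 0 ∧ q i = 0 then (1:ℝ) else 0)) * (b^2 + 2*b*(p i + q i - b))
        ≤ p i ^ 2 + q i ^ 2 := fun i _ => hlp_pointwise (p i) (q i) b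
    have hsum := Finset.sum_le_sum key
    have hSsum : ∑ i, (p i ^ 2 + q i ^ 2) = S := by rw [hSdef, Finset.sum_add_distrib]
    have hsplit : (N*b^2 - cI*b^2 - cJ*b^2) + 2*b*T'
        = ∑ i, (1 - (if p i ≠ 0 ∧ q i ≠ 0 then (1:ℝ) else 0)
           - (if p i = 0 ∧ q i = 0 then (1:ℝ) else 0)) * (b^2 + 2*b*(p i + q i - b)) := by
      rw [hcIdef, hcJdef, hT'def, ← hone]
      rw [Finset.sum_mul, Finset.sum_mul, Finset.sum_mul, Finset.mul_sum,
        ← Finset.sum_sub_distrib, ← Finset.sum_sub_distrib, ← Finset.sum_add_distrib]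
      exact Finset.sum_congr rfl (fun i _ => by ring)
    rw [hSsum] at hsum
    rw [← hsplit] at hsum
    linarith [hsum]
  -- bound 2*b*T' from below
  have habs : |b| ≤ 3/2 := hlp_absb b hb2le
  have hbT' : -(6*ξ*N) ≤ 2*b*T' := by
    have h2 : |2*b*T'| ≤ 3*T := by
      calc |2*b*T'| = 2 * |b| * |T'| := by rw [abs_mul, abs_mul, abs_two]
      _ ≤ 2*(3/2)*T := by
          apply mul_le_mul (by linarith) hT'abs (abs_nonneg _) (by norm_num)
      _ = 3*T := by ring
    have h3 := neg_abs_le (2*b*T')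
    linarith
  -- final arithmetic
  have hIJb : (cI + cJ) * b^2 ≤ 44 * ξ^2 * N := by
    have := mul_le_mul hcIJ hb2le (sq_nonneg b)
      (by positivity : (0:ℝ) ≤ 22 * ξ^2 * N)
    linarith [this]
  have hfinal : 2 * S ≥ 2*N - 46*ξ^2*N - 6*ξ*N := by
    linarith [hmain, hbT', hIJb, hnb, hAB2, hB0]
  have hξN : 0 < ξ * N := mul_pos hξ hN
  have hξξN : ξ^2 * N ≤ (1/2) * (ξ * N) := by
    have h5 : ξ * ξ ≤ ξ * (1/2) := mul_le_mul_of_nonneg_left (by linarith) hξ.le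
    have h6 := mul_le_mul_of_nonneg_right h5 hN.le
    linarith [h6]
  linarith [hfinal, hξN, hξξN]
open Finset

section
variable {n m : ℕ} (Φ : Matrix (Fin m) (Fin n) ℝ) (ε ξ : ℝ) (w : (Fin n ⊕ Fin n ⊕ Fin n) → ℝ)

private lemma mv1 (i : Fin n) : (Xt n m Φ ε ξ).mulVec w (.inl i) = w (.inl i) := by
  simp [Matrix.mulVec, dotProduct, Fintype.sum_sum_type, Xt, ite_mul]

private lemma mv2 (i : Fin n) :
    (Xt n m Φ ε ξ).mulVec w (.inr (.inl i)) = w (.inr (.inl i)) := by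
  simp [Matrix.mulVec, dotProduct, Fintype.sum_sum_type, Xt, ite_mul]

private lemma mv3 (i : Fin n) : (Xt n m Φ ε ξ).mulVec w (.inr (.inr (.inl i)))
    = ξ⁻¹ * (w (.inr (.inr i)) - (∑ j, w (.inr (.inr j))) / n) := by
  simp only [Matrix.mulVec, dotProduct, Fintype.sum_sum_type, Xt, Matrix.of_apply]
  simp only [zero_mul, Finset.sum_const_zero, zero_add]
  rw [Finset.sum_congr rfl (fun j _ => by ring_nf :
    ∀ j ∈ univ, (ξ⁻¹ * ((if i = j then (1:ℝ) else 0) - 1 / n)) * w (.inr (.inr j))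
      = ξ⁻¹ * ((if i = j then (1:ℝ) else 0) * w (.inr (.inr j)))
        - ξ⁻¹ * (w (.inr (.inr j)) / n))]
  simp [Finset.sum_sub_distrib, ← Finset.mul_sum, ite_mul, Finset.sum_div, mul_sub]

private lemma mv4 (i : Fin n) : (Xt n m Φ ε ξ).mulVec w (.inr (.inr (.inr (.inl i))))
    = ξ⁻¹ * (w (.inl i) + w (.inr (.inl i)) - w (.inr (.inr i))) := by
  simp [Matrix.mulVec, dotProduct, Fintype.sum_sum_type, Xt, ite_mul]
  ring
end

/-- Proposition 5 of the paper: if `ε² < 1/6`, `ξ ≤ ε`, `‖w‖² = 2n`,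
`‖w‖₀ ≤ 2(1+ξ²)n` and `‖X̃w‖² ≤ (1+ε²)n`, then `‖w⁺‖² + ‖w⁻‖² > (1 - 25ξ)n`. -/
theorem stmt_15 {n m : ℕ} (hn : 0 < n)
    (Φ : Matrix (Fin m) (Fin n) ℝ) (hΦ : ∀ i j, Φ i j = 0 ∨ Φ i j = 1)
    (ε ξ : ℝ) (hξ : 0 < ξ) (hξε : ξ ≤ ε) (hε : ε ^ 2 < 1 / 6)
    (w : (Fin n ⊕ Fin n ⊕ Fin n) → ℝ)
    (hw : ∑ j, w j ^ 2 = 2 * n)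
    (hw0 : ((Function.support w).ncard : ℝ) ≤ 2 * (1 + ξ ^ 2) * n)
    (hXw : ∑ i, ((Xt n m Φ ε ξ).mulVec w i) ^ 2 ≤ (1 + ε ^ 2) * n) :
    ∑ i, w (Sum.inl i) ^ 2 + ∑ i, w (Sum.inr (Sum.inl i)) ^ 2 > (1 - 25 * ξ) * n := by
  -- split the norm identity
  rw [Fintype.sum_sum_type, Fintype.sum_sum_type, ← add_assoc] at hw
  -- support count
  have hsetfin : Function.support w = ↑(Finset.univ.filter (fun x => w x ≠ 0)) := by
    ext x; simp [Function.support]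
  rw [hsetfin, Set.ncard_coe_finset, Finset.card_filter] at hw0
  push_cast at hw0
  rw [Fintype.sum_sum_type, Fintype.sum_sum_type] at hw0
  have hsupp : ∑ i, ((if w (Sum.inl i) ≠ 0 then (1:ℝ) else 0)
      + (if w (Sum.inr (Sum.inl i)) ≠ 0 then (1:ℝ) else 0)
      + (if w (Sum.inr (Sum.inr i)) ≠ 0 then (1:ℝ) else 0)) ≤ 2 * (1 + ξ^2) * n := by
    rw [Finset.sum_add_distrib, Finset.sum_add_distrib]
    linarith [hw0]
  -- expand ‖X̃w‖²
  rw [Fintype.sum_sum_type, Fintype.sum_sum_type, Fintype.sum_sum_type,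
    Fintype.sum_sum_type] at hXw
  simp only [mv1, mv2, mv3, mv4, mul_pow] at hXw
  rw [← Finset.mul_sum, ← Finset.mul_sum] at hXw
  have hlast : (0:ℝ) ≤ ∑ i : Fin m,
      ((Xt n m Φ ε ξ).mulVec w (.inr (.inr (.inr (.inr i)))))^2 :=
    Finset.sum_nonneg fun i _ => sq_nonneg _
  have hX : ∑ i, w (Sum.inl i) ^ 2 + ∑ i, w (Sum.inr (Sum.inl i)) ^ 2
      + ξ⁻¹ ^ 2 * ∑ i, (w (Sum.inr (Sum.inr i)) - (∑ j, w (Sum.inr (Sum.inr j))) / n) ^ 2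
      + ξ⁻¹ ^ 2 * ∑ i, (w (Sum.inl i) + w (Sum.inr (Sum.inl i)) - w (Sum.inr (Sum.inr i))) ^ 2
      ≤ (1 + ε^2) * n := by linarith [hXw, hlast]
  exact main_est n hn ε ξ hξ hξε hε (fun i => w (Sum.inl i)) (fun i => w (Sum.inr (Sum.inl i)))
    (fun i => w (Sum.inr (Sum.inr i))) hw hsupp hX
end

section
/- Given a 3SAT clause (a ∨ b ∨ c) on literals a, b, c and four fresh boolean variables z₁, z₂, z₃, z₄, consider the three exactly-one clauses E(a, z₁, z₂), E(¬b, z₁, z₃), E(¬c, z₂, z₄), where E(x, y, z) is true iff exactly one of its arguments is true. Then: (a) if an assignment satisfies (a ∨ b ∨ c), there is a setting of z₁,…,z₄ making all three exactly-one clauses true; and (b) if an assignment makes (a ∨ b ∨ c) false, then for every setting of z₁,…,z₄ at least one of the three exactly-one clauses is false. -/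
/-- The "exactly one" predicate on three booleans. -/
def exactlyOne (x y z : Bool) : Prop :=
  (x = true ∧ y = false ∧ z = false) ∨ (x = false ∧ y = true ∧ z = false) ∨
    (x = false ∧ y = false ∧ z = true)

/-- Gadget replacing a 3SAT clause `(a ∨ b ∨ c)` by the exactly-one clauses
`E(a,z₁,z₂)`, `E(¬b,z₁,z₃)`, `E(¬c,z₂,z₄)`: (a) if the clause is satisfied there is a
setting of `z₁,…,z₄` satisfying all three; (b) if the clause is unsatisfied, every setting
of `z₁,…,z₄` falsifies at least one of them. -/
theorem stmt_17 (a b c : Bool) :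
    ((a || b || c) = true →
      ∃ z₁ z₂ z₃ z₄ : Bool,
        exactlyOne a z₁ z₂ ∧ exactlyOne (!b) z₁ z₃ ∧ exactlyOne (!c) z₂ z₄) ∧
    ((a || b || c) = false →
      ∀ z₁ z₂ z₃ z₄ : Bool,
        ¬ (exactlyOne a z₁ z₂ ∧ exactlyOne (!b) z₁ z₃ ∧ exactlyOne (!c) z₂ z₄)) := by
  unfold exactlyOne
  cases a <;> cases b <;> cases c <;> simp <;> decide
end
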